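/- arXiv:1504.03830 — 8 statements merged into one kernel-verified Lean document; each statement's English description precedes it below -/
import Mathlib

section
/- Let X, Y be metric spaces, R ⊆ X × Y a correspondence, α ∈ [0,1], β = 1-α, and equip R with the semimetric d_α((x,y),(x',y')) = α·d_X(x,x') + β·d_Y(y,y'). Then the correspondence R_x = {(x,(x,y)) : (x,y) ∈ R} between X and (R, d_α) has distortion equal to β · dis(R), where dis(R) = sup{ |d_X(x,x') − d_Y(y,y')| : (x,y),(x',y') ∈ R }. -/
open GromovHausdorff Metric Filter Topology

open Pointwise
def IsCorrespondence {X Y : Type*} (R : Set (X × Y)) : Prop :=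
  (∀ x : X, ∃ y : Y, (x, y) ∈ R) ∧ (∀ y : Y, ∃ x : X, (x, y) ∈ R)

noncomputable def corrDis {X Y : Type*} [MetricSpace X] [MetricSpace Y]
    (R : Set (X × Y)) : ℝ :=
  sSup {r : ℝ | ∃ p ∈ R, ∃ q ∈ R, r = |dist p.1 q.1 - dist p.2 q.2|}

theorem stmt2 {X Y : Type*} [MetricSpace X] [MetricSpace Y]
    (R : Set (X × Y)) (hR : IsCorrespondence R)
    (α : ℝ) (hα : α ∈ Set.Icc (0 : ℝ) 1) :
    sSup {r : ℝ | ∃ p ∈ R, ∃ q ∈ R,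
        r = |dist p.1 q.1 - (α * dist p.1 q.1 + (1 - α) * dist p.2 q.2)|} =
      (1 - α) * corrDis R := by
  have hβ : 0 ≤ 1 - α := by linarith [hα.2]
  have hset : {r : ℝ | ∃ p ∈ R, ∃ q ∈ R,
        r = |dist p.1 q.1 - (α * dist p.1 q.1 + (1 - α) * dist p.2 q.2)|} =
      (1 - α) • {r : ℝ | ∃ p ∈ R, ∃ q ∈ R, r = |dist p.1 q.1 - dist p.2 q.2|} := by
    ext r
    constructor
    · rintro ⟨p, hp, q, hq, rfl⟩
      refine ⟨|dist p.1 q.1 - dist p.2 q.2|, ⟨p, hp, q, hq, rfl⟩, ?_⟩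
      have : dist p.1 q.1 - (α * dist p.1 q.1 + (1 - α) * dist p.2 q.2)
          = (1 - α) * (dist p.1 q.1 - dist p.2 q.2) := by ring
      simp only [this, smul_eq_mul, abs_mul, abs_of_nonneg hβ]
    · rintro ⟨s, ⟨p, hp, q, hq, rfl⟩, rfl⟩
      refine ⟨p, hp, q, hq, ?_⟩
      have : dist p.1 q.1 - (α * dist p.1 q.1 + (1 - α) * dist p.2 q.2)
          = (1 - α) * (dist p.1 q.1 - dist p.2 q.2) := by ring
      simp only [this, smul_eq_mul, abs_mul, abs_of_nonneg hβ]
  rw [hset, Real.sSup_smul_of_nonneg hβ, smul_eq_mul, corrDis]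
end

section
/- Let X, Y be metric spaces, R ⊆ X × Y a correspondence, α ∈ [0,1], β = 1-α, and equip R with d_α((x,y),(x',y')) = α·d_X(x,x') + β·d_Y(y,y'). Then the correspondence R_y = {((x,y),y) : (x,y) ∈ R} between (R, d_α) and Y has distortion equal to α · dis(R). -/
open GromovHausdorff Metric Filter Topology Pointwise

theorem stmt3 {X Y : Type*} [MetricSpace X] [MetricSpace Y]
    (R : Set (X × Y)) (hR : IsCorrespondence R)
    (α : ℝ) (hα : α ∈ Set.Icc (0 : ℝ) 1) :
    sSup {r : ℝ | ∃ p ∈ R, ∃ q ∈ R,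
        r = |(α * dist p.1 q.1 + (1 - α) * dist p.2 q.2) - dist p.2 q.2|} =
      α * corrDis R := by
  have hset : {r : ℝ | ∃ p ∈ R, ∃ q ∈ R,
        r = |(α * dist p.1 q.1 + (1 - α) * dist p.2 q.2) - dist p.2 q.2|} =
      α • {r : ℝ | ∃ p ∈ R, ∃ q ∈ R, r = |dist p.1 q.1 - dist p.2 q.2|} := by
    ext r
    constructor
    · rintro ⟨p, hp, q, hq, rfl⟩
      refine ⟨|dist p.1 q.1 - dist p.2 q.2|, ⟨p, hp, q, hq, rfl⟩, ?_⟩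
      have h : α * dist p.1 q.1 + (1 - α) * dist p.2 q.2 - dist p.2 q.2
          = α * (dist p.1 q.1 - dist p.2 q.2) := by ring
      simp only [smul_eq_mul, h, abs_mul, abs_of_nonneg hα.1]
    · rintro ⟨s, ⟨p, hp, q, hq, rfl⟩, rfl⟩
      refine ⟨p, hp, q, hq, ?_⟩
      have h : α * dist p.1 q.1 + (1 - α) * dist p.2 q.2 - dist p.2 q.2
          = α * (dist p.1 q.1 - dist p.2 q.2) := by ring
      simp only [smul_eq_mul, h, abs_mul, abs_of_nonneg hα.1]
  rw [hset, Real.sSup_smul_of_nonneg hα.1, corrDis, smul_eq_mul]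
end

section
/- Let X and Y be finite metric spaces and R an optimal correspondence on them (so d_GH(X,Y) = (1/2)·dis R). For α ∈ (0,1) and β = 1-α, equip R with the metric d_α((x,y),(x',y')) = α·d_X(x,x') + β·d_Y(y,y'). Then d_GH(X, (R,d_α)) = β·d_GH(X,Y) and d_GH((R,d_α), Y) = α·d_GH(X,Y). -/
open GromovHausdorff Metric Filter Topology

lemma dist_univ_subtype {Z : Type*} [MetricSpace Z] (p q : ↥(Set.univ : Set Z)) :
    dist p q = dist (p : Z) (q : Z) := rfl

theorem stmt6 {X Y : Type*} [MetricSpace X] [MetricSpace Y]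
    [Fintype X] [Fintype Y] [Nonempty X] [Nonempty Y]
    (R : Set (X × Y)) (hR : IsCorrespondence R) [Nonempty ↥R]
    (hopt : ghDist X Y = (1 / 2) * corrDis R)
    (α : ℝ) (hα : α ∈ Set.Ioo (0 : ℝ) 1)
    (dR : MetricSpace ↥R)
    (hdist : ∀ p q : ↥R, @dist _ dR.toDist p q =
      α * dist (p : X × Y).1 (q : X × Y).1 + (1 - α) * dist (p : X × Y).2 (q : X × Y).2) :
    (letI := dR; ghDist X ↥R = (1 - α) * ghDist X Y) ∧
    (letI := dR; ghDist ↥R Y = α * ghDist X Y) := by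
  letI := dR
  obtain ⟨hα0, hα1⟩ := hα
  -- the set defining corrDis is finite, hence bounded above
  have hbdd : BddAbove {r : ℝ | ∃ p ∈ R, ∃ q ∈ R, r = |dist p.1 q.1 - dist p.2 q.2|} := by
    have : {r : ℝ | ∃ p ∈ R, ∃ q ∈ R, r = |dist p.1 q.1 - dist p.2 q.2|} =
        (fun pq : (X × Y) × (X × Y) => |dist pq.1.1 pq.2.1 - dist pq.1.2 pq.2.2|) '' (R ×ˢ R) := by
      ext r
      constructor
      · rintro ⟨p, hp, q, hq, rfl⟩; exact ⟨(p, q), ⟨hp, hq⟩, rfl⟩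
      · rintro ⟨⟨p, q⟩, ⟨hp, hq⟩, rfl⟩; exact ⟨p, hp, q, hq, rfl⟩
    rw [this]
    exact ((Set.toFinite (R ×ˢ R)).image _).bddAbove
  have key : ∀ p q : ↥R, |dist (p : X × Y).1 (q : X × Y).1 - dist (p : X × Y).2 (q : X × Y).2|
      ≤ corrDis R := fun p q => le_csSup hbdd ⟨p, p.2, q, q.2, rfl⟩
  -- upper bound: ghDist R X ≤ (1-α) * corrDis R / 2
  have hRX : ghDist ↥R X ≤ (1 - α) * corrDis R / 2 := by
    have h := ghDist_le_of_approx_subsets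
      (X := ↥R) (Y := X) (s := (Set.univ : Set ↥R))
      (fun r => (r : ↥R).1.1)
      (ε₁ := 0) (ε₂ := (1 - α) * corrDis R) (ε₃ := 0)
      (fun x => ⟨x, Set.mem_univ x, by simp⟩)
      (fun x => by
        obtain ⟨y, hy⟩ := hR.1 x
        exact ⟨⟨⟨(x, y), hy⟩, Set.mem_univ _⟩, by simp⟩)
      (fun p q => by
        rw [dist_univ_subtype, hdist]
        have : α * dist ((p : ↥R) : X × Y).1 ((q : ↥R) : X × Y).1 +
            (1 - α) * dist ((p : ↥R) : X × Y).2 ((q : ↥R) : X × Y).2 -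
            dist ((p : ↥R) : X × Y).1 ((q : ↥R) : X × Y).1 =
            -((1 - α) * (dist ((p : ↥R) : X × Y).1 ((q : ↥R) : X × Y).1 -
              dist ((p : ↥R) : X × Y).2 ((q : ↥R) : X × Y).2)) := by ring
        rw [this, abs_neg, abs_mul, abs_of_nonneg (by linarith : (0:ℝ) ≤ 1 - α)]
        exact mul_le_mul_of_nonneg_left (key _ _) (by linarith))
    calc ghDist ↥R X ≤ 0 + (1 - α) * corrDis R / 2 + 0 := h
      _ = (1 - α) * corrDis R / 2 := by ring
  -- upper bound: ghDist R Y ≤ α * corrDis R / 2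
  have hRY : ghDist ↥R Y ≤ α * corrDis R / 2 := by
    have h := ghDist_le_of_approx_subsets
      (X := ↥R) (Y := Y) (s := (Set.univ : Set ↥R))
      (fun r => (r : ↥R).1.2)
      (ε₁ := 0) (ε₂ := α * corrDis R) (ε₃ := 0)
      (fun x => ⟨x, Set.mem_univ x, by simp⟩)
      (fun y => by
        obtain ⟨x, hx⟩ := hR.2 y
        exact ⟨⟨⟨(x, y), hx⟩, Set.mem_univ _⟩, by simp⟩)
      (fun p q => by
        rw [dist_univ_subtype, hdist]
        have : α * dist ((p : ↥R) : X × Y).1 ((q : ↥R) : X × Y).1 +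
            (1 - α) * dist ((p : ↥R) : X × Y).2 ((q : ↥R) : X × Y).2 -
            dist ((p : ↥R) : X × Y).2 ((q : ↥R) : X × Y).2 =
            α * (dist ((p : ↥R) : X × Y).1 ((q : ↥R) : X × Y).1 -
              dist ((p : ↥R) : X × Y).2 ((q : ↥R) : X × Y).2) := by ring
        rw [this, abs_mul, abs_of_nonneg hα0.le]
        exact mul_le_mul_of_nonneg_left (key _ _) hα0.le)
    calc ghDist ↥R Y ≤ 0 + α * corrDis R / 2 + 0 := h
      _ = α * corrDis R / 2 := by ring
  have hcomm : ghDist X ↥R = ghDist ↥R X := by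
    simp [ghDist, dist_comm]
  have htri : ghDist X Y ≤ ghDist X ↥R + ghDist ↥R Y := dist_triangle _ _ _
  have hXR : ghDist ↥R X ≤ (1 - α) * ghDist X Y := by
    rw [hopt]; linarith
  have hRY' : ghDist ↥R Y ≤ α * ghDist X Y := by
    rw [hopt]; linarith
  constructor
  · rw [hcomm]
    refine le_antisymm hXR ?_
    have := htri
    rw [hcomm] at this
    linarith
  · refine le_antisymm hRY' ?_
    have := htri
    rw [hcomm] at this
    linarith
end

section
/- Let X and Y be finite metric spaces, R an optimal correspondence on them, and equip R with d_{1/2}((x,y),(x',y')) = (d_X(x,x') + d_Y(y,y'))/2. Then (R, d_{1/2}) is a midpoint between X and Y in the Gromov–Hausdorff space: d_GH(X,R) = d_GH(R,Y) = (1/2)·d_GH(X,Y). -/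
open GromovHausdorff Metric Filter Topology

lemma ghDist_le_of_surj {Z W : Type*} [MetricSpace Z] [CompactSpace Z] [Nonempty Z]
    [MetricSpace W] [CompactSpace W] [Nonempty W] (f : Z → W)
    (hsurj : Function.Surjective f) {ε : ℝ}
    (H : ∀ p q : Z, |dist p q - dist (f p) (f q)| ≤ ε) :
    ghDist Z W ≤ ε / 2 := by
  have h := ghDist_le_of_approx_subsets (X := Z) (Y := W)
    (s := (Set.univ : Set Z)) (fun p => f p.1) (ε₁ := 0) (ε₂ := ε) (ε₃ := 0)
    (fun x => ⟨x, trivial, by simp⟩)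
    (fun w => by obtain ⟨z, rfl⟩ := hsurj w; exact ⟨⟨z, trivial⟩, by simp⟩)
    (fun x y => by rw [Subtype.dist_eq]; exact H x.1 y.1)
  linarith

theorem stmt7 {X Y : Type*} [MetricSpace X] [MetricSpace Y]
    [Fintype X] [Fintype Y] [Nonempty X] [Nonempty Y]
    (R : Set (X × Y)) (hR : IsCorrespondence R) [Nonempty ↥R]
    (hopt : ghDist X Y = (1 / 2) * corrDis R)
    (dR : MetricSpace ↥R)
    (hdist : ∀ p q : ↥R, @dist _ dR.toDist p q =
      (dist (p : X × Y).1 (q : X × Y).1 + dist (p : X × Y).2 (q : X × Y).2) / 2) :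
    (letI := dR; ghDist X ↥R = ghDist X Y / 2) ∧
    (letI := dR; ghDist ↥R Y = ghDist X Y / 2) := by
  letI := dR
  set K := corrDis R with hK
  -- the defining set of corrDis is finite, hence bounded above
  have hfin : {r : ℝ | ∃ p ∈ R, ∃ q ∈ R, r = |dist p.1 q.1 - dist p.2 q.2|}.Finite := by
    have : {r : ℝ | ∃ p ∈ R, ∃ q ∈ R, r = |dist p.1 q.1 - dist p.2 q.2|} ⊆
        (fun pq : (X × Y) × (X × Y) => |dist pq.1.1 pq.2.1 - dist pq.1.2 pq.2.2|) ''
          Set.univ := by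
      rintro r ⟨p, hp, q, hq, rfl⟩
      exact ⟨(p, q), trivial, rfl⟩
    exact (Set.toFinite _).subset this
  have hbdd : BddAbove {r : ℝ | ∃ p ∈ R, ∃ q ∈ R, r = |dist p.1 q.1 - dist p.2 q.2|} :=
    hfin.bddAbove
  have hle : ∀ p ∈ R, ∀ q ∈ R, |dist p.1 q.1 - dist p.2 q.2| ≤ K := by
    intro p hp q hq
    exact le_csSup hbdd ⟨p, hp, q, hq, rfl⟩
  have hK0 : 0 ≤ K := by
    obtain ⟨p, hp⟩ := (inferInstance : Nonempty ↥R)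
    have := hle p hp p hp
    have h0 : (0:ℝ) ≤ |dist (p : X × Y).1 (p : X × Y).1 - dist (p : X × Y).2 (p : X × Y).2| :=
      abs_nonneg _
    linarith
  -- bound ghDist ↥R X and ↥R Y
  have hRX : ghDist ↥R X ≤ (K / 2) / 2 := by
    refine ghDist_le_of_surj (fun p => (p.1 : X × Y).1) ?_ ?_
    · intro x
      obtain ⟨y, hy⟩ := hR.1 x
      exact ⟨⟨(x, y), hy⟩, rfl⟩
    · intro p q
      rw [hdist p q]
      have h2 := hle p.1 p.2 q.1 q.2
      rw [abs_le] at h2 ⊢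
      constructor <;> [linarith [h2.2]; linarith [h2.1]]
  have hRY : ghDist ↥R Y ≤ (K / 2) / 2 := by
    refine ghDist_le_of_surj (fun p => (p.1 : X × Y).2) ?_ ?_
    · intro y
      obtain ⟨x, hx⟩ := hR.2 y
      exact ⟨⟨(x, y), hx⟩, rfl⟩
    · intro p q
      rw [hdist p q]
      have h2 := hle p.1 p.2 q.1 q.2
      rw [abs_le] at h2 ⊢
      constructor <;> [linarith [h2.1]; linarith [h2.2]]
  -- symmetry of ghDist
  have hsymmX : ghDist X ↥R = ghDist ↥R X := by
    unfold ghDist; exact dist_comm _ _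
  -- triangle inequality
  have htri : ghDist X Y ≤ ghDist X ↥R + ghDist ↥R Y := by
    unfold ghDist; exact dist_triangle _ _ _
  have hnnX : 0 ≤ ghDist X ↥R := by unfold ghDist; exact dist_nonneg
  have hnnY : 0 ≤ ghDist ↥R Y := by unfold ghDist; exact dist_nonneg
  constructor
  · rw [hsymmX]; linarith [hRX, hRY, htri, hopt, hsymmX]
  · linarith [hRX, hRY, htri, hopt, hsymmX]
end

section
/- For any two compact metric spaces X and Y there exists a compact metric space R that is a midpoint between them in the Gromov–Hausdorff metric: d_GH(X,R) = d_GH(R,Y) = d_GH(X,Y)/2. -/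
open GromovHausdorff Metric Filter Topology

section Mid

variable (X Y : Type) [MetricSpace X] [Nonempty X] [CompactSpace X]
    [MetricSpace Y] [Nonempty Y] [CompactSpace Y]

/-- The optimal correspondence between `X` and `Y`, as a subset of `X × Y`. -/
def MidSet : Set (X × Y) :=
  {p | dist (optimalGHInjl X Y p.1) (optimalGHInjr X Y p.2) ≤ ghDist X Y}

/-- Midpoint candidate space: type synonym so we can put a new metric on it. -/
def Mid : Type := ↥(MidSet X Y)

def Mid.mk (p : ↥(MidSet X Y)) : Mid X Y := p

def Mid.toS (p : Mid X Y) : ↥(MidSet X Y) := p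

def Mid.fst (p : Mid X Y) : X := (Mid.toS X Y p).val.1

def Mid.snd (p : Mid X Y) : Y := (Mid.toS X Y p).val.2

theorem Mid.prop (p : Mid X Y) :
    dist (optimalGHInjl X Y (Mid.fst X Y p)) (optimalGHInjr X Y (Mid.snd X Y p)) ≤ ghDist X Y :=
  (Mid.toS X Y p).property

theorem Mid.ext {p q : Mid X Y} (h1 : Mid.fst X Y p = Mid.fst X Y q)
    (h2 : Mid.snd X Y p = Mid.snd X Y q) : p = q := by
  have : Mid.toS X Y p = Mid.toS X Y q := Subtype.ext (Prod.ext h1 h2)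
  exact congrArg (Mid.mk X Y) this

theorem hausdorffEdist_opt_ne_top :
    EMetric.hausdorffEdist (Set.range (optimalGHInjl X Y)) (Set.range (optimalGHInjr X Y)) ≠ ⊤ := by
  have hl : IsCompact (Set.range (optimalGHInjl X Y)) :=
    isCompact_range (isometry_optimalGHInjl X Y).continuous
  have hr : IsCompact (Set.range (optimalGHInjr X Y)) :=
    isCompact_range (isometry_optimalGHInjr X Y).continuous
  exact hausdorffEdist_ne_top_of_nonempty_of_bounded (Set.range_nonempty _)
    (Set.range_nonempty _) hl.isBounded hr.isBounded

theorem mid_exists_left (x : X) :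
    ∃ y : Y, dist (optimalGHInjl X Y x) (optimalGHInjr X Y y) ≤ ghDist X Y := by
  have hr : IsCompact (Set.range (optimalGHInjr X Y)) :=
    isCompact_range (isometry_optimalGHInjr X Y).continuous
  obtain ⟨z, hz, hdz⟩ := hr.exists_infDist_eq_dist (Set.range_nonempty _) (optimalGHInjl X Y x)
  obtain ⟨y, rfl⟩ := hz
  refine ⟨y, ?_⟩
  calc dist (optimalGHInjl X Y x) (optimalGHInjr X Y y)
      = infDist (optimalGHInjl X Y x) (Set.range (optimalGHInjr X Y)) := hdz.symm
    _ ≤ hausdorffDist (Set.range (optimalGHInjl X Y)) (Set.range (optimalGHInjr X Y)) :=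
        infDist_le_hausdorffDist_of_mem (Set.mem_range_self x) (hausdorffEdist_opt_ne_top X Y)
    _ = ghDist X Y := hausdorffDist_optimal (X := X) (Y := Y)

theorem mid_exists_right (y : Y) :
    ∃ x : X, dist (optimalGHInjl X Y x) (optimalGHInjr X Y y) ≤ ghDist X Y := by
  have hl : IsCompact (Set.range (optimalGHInjl X Y)) :=
    isCompact_range (isometry_optimalGHInjl X Y).continuous
  obtain ⟨z, hz, hdz⟩ := hl.exists_infDist_eq_dist (Set.range_nonempty _) (optimalGHInjr X Y y)
  obtain ⟨x, rfl⟩ := hz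
  refine ⟨x, ?_⟩
  rw [dist_comm]
  calc dist (optimalGHInjr X Y y) (optimalGHInjl X Y x)
      = infDist (optimalGHInjr X Y y) (Set.range (optimalGHInjl X Y)) := hdz.symm
    _ ≤ hausdorffDist (Set.range (optimalGHInjr X Y)) (Set.range (optimalGHInjl X Y)) :=
        infDist_le_hausdorffDist_of_mem (Set.mem_range_self y)
          (by rw [EMetric.hausdorffEdist_comm]; exact hausdorffEdist_opt_ne_top X Y)
    _ = ghDist X Y := by rw [hausdorffDist_comm]; exact hausdorffDist_optimal (X := X) (Y := Y)

theorem mid_dist_bound (p q : Mid X Y) :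
    |dist (Mid.fst X Y p) (Mid.fst X Y q) - dist (Mid.snd X Y p) (Mid.snd X Y q)|
      ≤ 2 * ghDist X Y := by
  set a := optimalGHInjl X Y (Mid.fst X Y p)
  set a' := optimalGHInjl X Y (Mid.fst X Y q)
  set b := optimalGHInjr X Y (Mid.snd X Y p)
  set b' := optimalGHInjr X Y (Mid.snd X Y q)
  have h1 : dist (Mid.fst X Y p) (Mid.fst X Y q) = dist a a' :=
    ((isometry_optimalGHInjl X Y).dist_eq _ _).symm
  have h2 : dist (Mid.snd X Y p) (Mid.snd X Y q) = dist b b' :=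
    ((isometry_optimalGHInjr X Y).dist_eq _ _).symm
  rw [h1, h2]
  have hab : dist a b ≤ ghDist X Y := Mid.prop X Y p
  have hab' : dist a' b' ≤ ghDist X Y := Mid.prop X Y q
  have t1 : |dist a a' - dist b a'| ≤ dist a b := abs_dist_sub_le _ _ _
  have t2 : |dist b a' - dist b b'| ≤ dist a' b' := by
    rw [dist_comm b a', dist_comm b b']
    exact abs_dist_sub_le _ _ _
  calc |dist a a' - dist b b'| ≤ |dist a a' - dist b a'| + |dist b a' - dist b b'| := by
        have := abs_sub_le (dist a a') (dist b a') (dist b b'); linarith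
    _ ≤ dist a b + dist a' b' := add_le_add t1 t2
    _ ≤ 2 * ghDist X Y := by linarith

noncomputable instance : MetricSpace (Mid X Y) where
  dist p q := (dist (Mid.fst X Y p) (Mid.fst X Y q) + dist (Mid.snd X Y p) (Mid.snd X Y q)) / 2
  dist_self p := by simp
  dist_comm p q := by simp [dist_comm]
  dist_triangle p q r := by
    have h1 := dist_triangle (Mid.fst X Y p) (Mid.fst X Y q) (Mid.fst X Y r)
    have h2 := dist_triangle (Mid.snd X Y p) (Mid.snd X Y q) (Mid.snd X Y r)
    linarith
  eq_of_dist_eq_zero := by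
    intro p q h
    have n1 : (0:ℝ) ≤ dist (Mid.fst X Y p) (Mid.fst X Y q) := dist_nonneg
    have n2 : (0:ℝ) ≤ dist (Mid.snd X Y p) (Mid.snd X Y q) := dist_nonneg
    have e1 : dist (Mid.fst X Y p) (Mid.fst X Y q) = 0 := by linarith
    have e2 : dist (Mid.snd X Y p) (Mid.snd X Y q) = 0 := by linarith
    exact Mid.ext X Y (eq_of_dist_eq_zero e1) (eq_of_dist_eq_zero e2)

theorem mid_dist_def (p q : Mid X Y) :
    dist p q
      = (dist (Mid.fst X Y p) (Mid.fst X Y q) + dist (Mid.snd X Y p) (Mid.snd X Y q)) / 2 :=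
  rfl

instance : Nonempty (Mid X Y) := by
  obtain ⟨y, hy⟩ := mid_exists_left X Y (Classical.arbitrary X)
  exact ⟨Mid.mk X Y ⟨(Classical.arbitrary X, y), hy⟩⟩

instance : CompactSpace (Mid X Y) := by
  have hclosed : IsClosed (MidSet X Y) := by
    apply isClosed_le _ continuous_const
    exact Continuous.dist
      ((isometry_optimalGHInjl X Y).continuous.comp continuous_fst)
      ((isometry_optimalGHInjr X Y).continuous.comp continuous_snd)
  haveI : CompactSpace (↥(MidSet X Y)) :=
    isCompact_iff_compactSpace.mp hclosed.isCompact
  have hf : Continuous (Mid.mk X Y) := by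
    refine LipschitzWith.continuous (K := 1) (LipschitzWith.of_dist_le_mul fun p q => ?_)
    rw [NNReal.coe_one, one_mul, mid_dist_def]
    have hpq : dist p q = max (dist p.val.1 q.val.1) (dist p.val.2 q.val.2) := by
      rw [Subtype.dist_eq, Prod.dist_eq]
    have e1 : dist (Mid.fst X Y (Mid.mk X Y p)) (Mid.fst X Y (Mid.mk X Y q))
        = dist p.val.1 q.val.1 := rfl
    have e2 : dist (Mid.snd X Y (Mid.mk X Y p)) (Mid.snd X Y (Mid.mk X Y q))
        = dist p.val.2 q.val.2 := rfl
    rw [e1, e2, hpq]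
    have := le_max_left (dist p.val.1 q.val.1) (dist p.val.2 q.val.2)
    have := le_max_right (dist p.val.1 q.val.1) (dist p.val.2 q.val.2)
    linarith
  have hrange : Set.range (Mid.mk X Y) = Set.univ :=
    Set.range_eq_univ.mpr fun m => ⟨Mid.toS X Y m, rfl⟩
  have : IsCompact (Set.univ : Set (Mid X Y)) := by
    rw [← hrange]; exact isCompact_range hf
  exact isCompact_univ_iff.mp this

theorem ghDist_mid_left (hd : 0 < ghDist X Y) :
    ghDist X (Mid X Y) ≤ ghDist X Y / 2 := by
  have H : ∀ p q : Mid X Y,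
      |dist (Mid.fst X Y p) (Mid.fst X Y q) - dist p q| ≤ 2 * (ghDist X Y / 2) := by
    intro p q
    rw [mid_dist_def]
    have := mid_dist_bound X Y p q
    rw [abs_le] at this ⊢
    constructor <;> [linarith [this.1]; linarith [this.2]]
  letI : MetricSpace (X ⊕ Mid X Y) :=
    glueMetricApprox (Mid.fst X Y) (id : Mid X Y → Mid X Y) (ghDist X Y / 2) (by linarith) H
  have isom_l : Isometry (Sum.inl : X → X ⊕ Mid X Y) := Isometry.of_dist_eq fun a b => rfl
  have isom_r : Isometry (Sum.inr : Mid X Y → X ⊕ Mid X Y) := Isometry.of_dist_eq fun a b => rfl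
  have hHD : hausdorffDist (Set.range (Sum.inl : X → X ⊕ Mid X Y))
      (Set.range (Sum.inr : Mid X Y → X ⊕ Mid X Y)) ≤ ghDist X Y / 2 := by
    apply hausdorffDist_le_of_mem_dist (by linarith)
    · rintro _ ⟨x, rfl⟩
      obtain ⟨y, hy⟩ := mid_exists_left X Y x
      refine ⟨Sum.inr (Mid.mk X Y ⟨(x, y), hy⟩), Set.mem_range_self _, ?_⟩
      have := glueDist_glued_points (Mid.fst X Y) (id : Mid X Y → Mid X Y) (ghDist X Y / 2)
        (Mid.mk X Y ⟨(x, y), hy⟩)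
      exact le_of_eq this
    · rintro _ ⟨m, rfl⟩
      refine ⟨Sum.inl (Mid.fst X Y m), Set.mem_range_self _, ?_⟩
      rw [dist_comm]
      have := glueDist_glued_points (Mid.fst X Y) (id : Mid X Y → Mid X Y) (ghDist X Y / 2) m
      exact le_of_eq this
  exact le_trans (ghDist_le_hausdorffDist isom_l isom_r) hHD

theorem ghDist_mid_right (hd : 0 < ghDist X Y) :
    ghDist (Mid X Y) Y ≤ ghDist X Y / 2 := by
  have H : ∀ p q : Mid X Y,
      |dist p q - dist (Mid.snd X Y p) (Mid.snd X Y q)| ≤ 2 * (ghDist X Y / 2) := by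
    intro p q
    rw [mid_dist_def]
    have := mid_dist_bound X Y p q
    rw [abs_le] at this ⊢
    constructor <;> [linarith [this.2]; linarith [this.1]]
  letI : MetricSpace (Mid X Y ⊕ Y) :=
    glueMetricApprox (id : Mid X Y → Mid X Y) (Mid.snd X Y) (ghDist X Y / 2) (by linarith) H
  have isom_l : Isometry (Sum.inl : Mid X Y → Mid X Y ⊕ Y) := Isometry.of_dist_eq fun a b => rfl
  have isom_r : Isometry (Sum.inr : Y → Mid X Y ⊕ Y) := Isometry.of_dist_eq fun a b => rfl
  have hHD : hausdorffDist (Set.range (Sum.inl : Mid X Y → Mid X Y ⊕ Y))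
      (Set.range (Sum.inr : Y → Mid X Y ⊕ Y)) ≤ ghDist X Y / 2 := by
    apply hausdorffDist_le_of_mem_dist (by linarith)
    · rintro _ ⟨m, rfl⟩
      refine ⟨Sum.inr (Mid.snd X Y m), Set.mem_range_self _, ?_⟩
      have := glueDist_glued_points (id : Mid X Y → Mid X Y) (Mid.snd X Y) (ghDist X Y / 2) m
      exact le_of_eq this
    · rintro _ ⟨y, rfl⟩
      obtain ⟨x, hx⟩ := mid_exists_right X Y y
      refine ⟨Sum.inl (Mid.mk X Y ⟨(x, y), hx⟩), Set.mem_range_self _, ?_⟩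
      rw [dist_comm]
      have := glueDist_glued_points (id : Mid X Y → Mid X Y) (Mid.snd X Y) (ghDist X Y / 2)
        (Mid.mk X Y ⟨(x, y), hx⟩)
      exact le_of_eq this
  exact le_trans (ghDist_le_hausdorffDist isom_l isom_r) hHD

end Mid

theorem stmt13 (X Y : Type) [MetricSpace X] [Nonempty X] [CompactSpace X]
    [MetricSpace Y] [Nonempty Y] [CompactSpace Y] :
    ∃ (R : Type) (mR : MetricSpace R),
      letI := mR
      ∃ (_ : CompactSpace R) (_ : Nonempty R),
        ghDist X R = ghDist X Y / 2 ∧ ghDist R Y = ghDist X Y / 2 := by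
  have hnn : 0 ≤ ghDist X Y := dist_nonneg
  rcases eq_or_lt_of_le hnn with h0 | hpos
  · refine ⟨X, inferInstance, inferInstance, inferInstance, ?_, ?_⟩
    · show dist (toGHSpace X) (toGHSpace X) = ghDist X Y / 2
      rw [dist_self, ← h0]
      norm_num
    · show ghDist X Y = ghDist X Y / 2
      rw [← h0]
      norm_num
  · refine ⟨Mid X Y, inferInstance, inferInstance, inferInstance, ?_, ?_⟩
    · have h1 := ghDist_mid_left X Y hpos
      have h2 := ghDist_mid_right X Y hpos
      have tri : ghDist X Y ≤ ghDist X (Mid X Y) + ghDist (Mid X Y) Y :=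
        dist_triangle (toGHSpace X) (toGHSpace (Mid X Y)) (toGHSpace Y)
      linarith
    · have h1 := ghDist_mid_left X Y hpos
      have h2 := ghDist_mid_right X Y hpos
      have tri : ghDist X Y ≤ ghDist X (Mid X Y) + ghDist (Mid X Y) Y :=
        dist_triangle (toGHSpace X) (toGHSpace (Mid X Y)) (toGHSpace Y)
      linarith
end

section
/- The space 𝔐 of isometry classes of nonempty compact metric spaces endowed with the Gromov–Hausdorff metric is a geodesic metric space: any two compact metric spaces X and Y can be joined by an isometric embedding γ: [0, d_GH(X,Y)] → 𝔐 with γ(0) = X and γ(d_GH(X,Y)) = Y. -/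
open GromovHausdorff Metric Filter Topology

namespace GHGeoAux

variable {A B : Type} [MetricSpace A] [MetricSpace B]

/-- The convex interpolation distance on a subset of `A × B`. -/
noncomputable def interpDist (R : Set (A × B)) (c : ℝ) (p q : ↥R) : ℝ :=
  (1 - c) * dist (p : A × B).1 (q : A × B).1 + c * dist (p : A × B).2 (q : A × B).2

/-- For `0 < c < 1` the interpolation distance is a metric. -/
noncomputable def interpMetric (R : Set (A × B)) (c : ℝ) (hc0 : 0 < c) (hc1 : c < 1) :
    MetricSpace ↥R where
  dist := interpDist R c
  dist_self p := by simp [interpDist]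
  dist_comm p q := by simp [interpDist, dist_comm]
  dist_triangle p q r := by
    have h1 := dist_triangle (p : A × B).1 (q : A × B).1 (r : A × B).1
    have h2 := dist_triangle (p : A × B).2 (q : A × B).2 (r : A × B).2
    simp only [interpDist]
    nlinarith [hc0.le, hc1.le]
  eq_of_dist_eq_zero := by
    intro p q h
    simp only [interpDist] at h
    have d1 : (0:ℝ) ≤ dist (p : A × B).1 (q : A × B).1 := dist_nonneg
    have d2 : (0:ℝ) ≤ dist (p : A × B).2 (q : A × B).2 := dist_nonneg
    have e1 : dist (p : A × B).1 (q : A × B).1 = 0 := by nlinarith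
    have e2 : dist (p : A × B).2 (q : A × B).2 = 0 := by nlinarith
    have h1 : (p : A × B).1 = (q : A × B).1 := by rwa [dist_eq_zero] at e1
    have h2 : (p : A × B).2 = (q : A × B).2 := by rwa [dist_eq_zero] at e2
    exact Subtype.ext (Prod.ext h1 h2)

theorem interpMetric_dist (R : Set (A × B)) (c : ℝ) (hc0 : 0 < c) (hc1 : c < 1) (p q : ↥R) :
    @dist ↥R (interpMetric R c hc0 hc1).toDist p q = interpDist R c p q := rfl

theorem interp_compactSpace [CompactSpace A] [CompactSpace B] (R : Set (A × B))
    (hR : IsClosed R) (c : ℝ) (hc0 : 0 < c) (hc1 : c < 1) :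
    @CompactSpace ↥R (interpMetric R c hc0 hc1).toUniformSpace.toTopologicalSpace := by
  have hK : IsCompact (Set.univ : Set ↥R) := by
    have h1 : IsCompact R := hR.isCompact
    rwa [isCompact_iff_isCompact_univ] at h1
  have hcont : @Continuous ↥R ↥R _
      (interpMetric R c hc0 hc1).toUniformSpace.toTopologicalSpace id := by
    refine (@Metric.continuous_iff ↥R ↥R _ (interpMetric R c hc0 hc1).toPseudoMetricSpace id).2 ?_
    intro b ε hε
    refine ⟨ε, hε, fun a hab => ?_⟩
    have hle : interpDist R c a b ≤ dist a b := by
      have h1 : dist (a : A × B).1 (b : A × B).1 ≤ dist a b := by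
        rw [Subtype.dist_eq, Prod.dist_eq]; exact le_max_left _ _
      have h2 : dist (a : A × B).2 (b : A × B).2 ≤ dist a b := by
        rw [Subtype.dist_eq, Prod.dist_eq]; exact le_max_right _ _
      simp only [interpDist]; nlinarith
    calc @dist ↥R (interpMetric R c hc0 hc1).toDist (id a) (id b)
        = interpDist R c a b := rfl
      _ ≤ dist a b := hle
      _ < ε := hab
  have h2 : @IsCompact ↥R (interpMetric R c hc0 hc1).toUniformSpace.toTopologicalSpace
      (id '' Set.univ) :=
    @IsCompact.image ↥R ↥R _ (interpMetric R c hc0 hc1).toUniformSpace.toTopologicalSpace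
      Set.univ id hK hcont
  exact @CompactSpace.mk ↥R (interpMetric R c hc0 hc1).toUniformSpace.toTopologicalSpace
    (by simpa using h2)

/-- The Gromov–Hausdorff point associated to the interpolation space. -/
noncomputable def interpGH [CompactSpace A] [CompactSpace B] (R : Set (A × B)) (hR : IsClosed R)
    (hne : Nonempty ↥R) (c : ℝ) (hc0 : 0 < c) (hc1 : c < 1) : GHSpace :=
  @toGHSpace ↥R (interpMetric R c hc0 hc1) (interp_compactSpace R hR c hc0 hc1) hne

/-- Glueing estimate: two surjective maps from a common space with distortion `≤ 2ε`
give Gromov–Hausdorff distance at most `ε`. -/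
theorem ghDist_le_of_glue {Z P Q : Type} [MetricSpace P] [CompactSpace P] [Nonempty P]
    [MetricSpace Q] [CompactSpace Q] [Nonempty Q] [Nonempty Z] (Φ : Z → P) (Ψ : Z → Q) {ε : ℝ}
    (hε : 0 < ε) (H : ∀ p q, |dist (Φ p) (Φ q) - dist (Ψ p) (Ψ q)| ≤ 2 * ε)
    (hΦ : Function.Surjective Φ) (hΨ : Function.Surjective Ψ) :
    dist (toGHSpace P) (toGHSpace Q) ≤ ε := by
  letI m : MetricSpace (P ⊕ Q) := glueMetricApprox Φ Ψ ε hε H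
  have isomL : Isometry (Sum.inl : P → P ⊕ Q) := Isometry.of_dist_eq fun x y => rfl
  have isomR : Isometry (Sum.inr : Q → P ⊕ Q) := Isometry.of_dist_eq fun x y => rfl
  have h1 : dist (toGHSpace P) (toGHSpace Q) ≤
      hausdorffDist (Set.range (Sum.inl : P → P ⊕ Q)) (Set.range (Sum.inr : Q → P ⊕ Q)) :=
    ghDist_le_hausdorffDist isomL isomR
  refine h1.trans (hausdorffDist_le_of_mem_dist hε.le ?_ ?_)
  · rintro _ ⟨p, rfl⟩
    obtain ⟨z, rfl⟩ := hΦ p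
    exact ⟨Sum.inr (Ψ z), Set.mem_range_self _, le_of_eq (glueDist_glued_points Φ Ψ ε z)⟩
  · rintro _ ⟨q, rfl⟩
    obtain ⟨z, rfl⟩ := hΨ q
    refine ⟨Sum.inl (Φ z), Set.mem_range_self _, ?_⟩
    rw [dist_comm]
    exact le_of_eq (glueDist_glued_points Φ Ψ ε z)

end GHGeoAux

open GHGeoAux in
theorem stmt15 (X Y : GHSpace) :
    ∃ γ : ℝ → GHSpace, γ 0 = X ∧ γ (dist X Y) = Y ∧
      ∀ s ∈ Set.Icc (0 : ℝ) (dist X Y), ∀ t ∈ Set.Icc (0 : ℝ) (dist X Y),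
        dist (γ s) (γ t) = |s - t| := by
  classical
  by_cases hd0 : dist X Y = 0
  · have hXY : X = Y := eq_of_dist_eq_zero hd0
    refine ⟨fun _ => X, rfl, by rw [hd0, hXY], ?_⟩
    intro s hs t ht
    rw [hd0] at hs ht
    have hs0 : s = 0 := le_antisymm hs.2 hs.1
    have ht0 : t = 0 := le_antisymm ht.2 ht.1
    simp [hs0, ht0]
  -- main case : d > 0
  have hd : 0 < dist X Y := lt_of_le_of_ne dist_nonneg (Ne.symm hd0)
  set d : ℝ := dist X Y with hdd
  have hgh : d = ghDist X.Rep Y.Rep := dist_ghDist X Y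
  -- the optimal correspondence
  set R : Set (X.Rep × Y.Rep) :=
    {p | dist (optimalGHInjl X.Rep Y.Rep p.1) (optimalGHInjr X.Rep Y.Rep p.2) ≤ d} with hR
  have hclosed : IsClosed R := by
    apply isClosed_le _ continuous_const
    exact ((isometry_optimalGHInjl X.Rep Y.Rep).continuous.comp continuous_fst).dist
      ((isometry_optimalGHInjr X.Rep Y.Rep).continuous.comp continuous_snd)
  have hfin : EMetric.hausdorffEdist (Set.range (optimalGHInjl X.Rep Y.Rep))
      (Set.range (optimalGHInjr X.Rep Y.Rep)) ≠ ⊤ :=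
    hausdorffEdist_ne_top_of_nonempty_of_bounded (Set.range_nonempty _) (Set.range_nonempty _)
      (isCompact_range (isometry_optimalGHInjl X.Rep Y.Rep).continuous).isBounded
      (isCompact_range (isometry_optimalGHInjr X.Rep Y.Rep).continuous).isBounded
  have surjL : ∀ a : X.Rep, ∃ b : Y.Rep, (a, b) ∈ R := by
    intro a
    obtain ⟨y, hy, hdy⟩ := (isCompact_range (isometry_optimalGHInjr X.Rep Y.Rep).continuous)
      |>.exists_infDist_eq_dist (Set.range_nonempty _) (optimalGHInjl X.Rep Y.Rep a)
    obtain ⟨b, rfl⟩ := hy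
    refine ⟨b, ?_⟩
    have h1 := infDist_le_hausdorffDist_of_mem
      (Set.mem_range_self (f := optimalGHInjl X.Rep Y.Rep) a) hfin
    rw [hausdorffDist_optimal, ← hgh] at h1
    show dist (optimalGHInjl X.Rep Y.Rep a) (optimalGHInjr X.Rep Y.Rep b) ≤ d
    rw [← hdy]
    exact h1
  have surjR : ∀ b : Y.Rep, ∃ a : X.Rep, (a, b) ∈ R := by
    intro b
    obtain ⟨y, hy, hdy⟩ := (isCompact_range (isometry_optimalGHInjl X.Rep Y.Rep).continuous)
      |>.exists_infDist_eq_dist (Set.range_nonempty _) (optimalGHInjr X.Rep Y.Rep b)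
    obtain ⟨a, rfl⟩ := hy
    refine ⟨a, ?_⟩
    have h1 := infDist_le_hausdorffDist_of_mem
      (Set.mem_range_self (f := optimalGHInjr X.Rep Y.Rep) b)
      (by rw [EMetric.hausdorffEdist_comm]; exact hfin)
    rw [hausdorffDist_comm, hausdorffDist_optimal, ← hgh] at h1
    show dist (optimalGHInjl X.Rep Y.Rep a) (optimalGHInjr X.Rep Y.Rep b) ≤ d
    rw [dist_comm, ← hdy]
    exact h1
  have hRne : Nonempty ↥R := by
    obtain ⟨b, hb⟩ := surjL (Classical.arbitrary X.Rep)
    exact ⟨⟨(Classical.arbitrary X.Rep, b), hb⟩⟩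
  -- distortion bound
  have habs : ∀ p q : ↥R,
      |dist (p : X.Rep × Y.Rep).1 (q : X.Rep × Y.Rep).1 - dist (p : X.Rep × Y.Rep).2 (q : X.Rep × Y.Rep).2| ≤ 2 * d := by
    intro p q
    have hp : dist (optimalGHInjl X.Rep Y.Rep (p : X.Rep × Y.Rep).1) (optimalGHInjr X.Rep Y.Rep (p : X.Rep × Y.Rep).2) ≤ d := p.2
    have hq : dist (optimalGHInjl X.Rep Y.Rep (q : X.Rep × Y.Rep).1) (optimalGHInjr X.Rep Y.Rep (q : X.Rep × Y.Rep).2) ≤ d := q.2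
    have e1 : dist (p : X.Rep × Y.Rep).1 (q : X.Rep × Y.Rep).1 =
        dist (optimalGHInjl X.Rep Y.Rep (p : X.Rep × Y.Rep).1) (optimalGHInjl X.Rep Y.Rep (q : X.Rep × Y.Rep).1) :=
      ((isometry_optimalGHInjl X.Rep Y.Rep).dist_eq _ _).symm
    have e2 : dist (p : X.Rep × Y.Rep).2 (q : X.Rep × Y.Rep).2 =
        dist (optimalGHInjr X.Rep Y.Rep (p : X.Rep × Y.Rep).2) (optimalGHInjr X.Rep Y.Rep (q : X.Rep × Y.Rep).2) :=
      ((isometry_optimalGHInjr X.Rep Y.Rep).dist_eq _ _).symm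
    have t1 := dist_triangle4 (optimalGHInjl X.Rep Y.Rep (p : X.Rep × Y.Rep).1)
      (optimalGHInjr X.Rep Y.Rep (p : X.Rep × Y.Rep).2) (optimalGHInjr X.Rep Y.Rep (q : X.Rep × Y.Rep).2)
      (optimalGHInjr X.Rep Y.Rep (q : X.Rep × Y.Rep).2)
    have t1' := dist_triangle4 (optimalGHInjl X.Rep Y.Rep (p : X.Rep × Y.Rep).1)
      (optimalGHInjr X.Rep Y.Rep (p : X.Rep × Y.Rep).2) (optimalGHInjr X.Rep Y.Rep (q : X.Rep × Y.Rep).2)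
      (optimalGHInjl X.Rep Y.Rep (q : X.Rep × Y.Rep).1)
    have t2' := dist_triangle4 (optimalGHInjr X.Rep Y.Rep (p : X.Rep × Y.Rep).2)
      (optimalGHInjl X.Rep Y.Rep (p : X.Rep × Y.Rep).1) (optimalGHInjl X.Rep Y.Rep (q : X.Rep × Y.Rep).1)
      (optimalGHInjr X.Rep Y.Rep (q : X.Rep × Y.Rep).2)
    have c1 : dist (optimalGHInjr X.Rep Y.Rep (q : X.Rep × Y.Rep).2) (optimalGHInjl X.Rep Y.Rep (q : X.Rep × Y.Rep).1) =
        dist (optimalGHInjl X.Rep Y.Rep (q : X.Rep × Y.Rep).1) (optimalGHInjr X.Rep Y.Rep (q : X.Rep × Y.Rep).2) := dist_comm _ _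
    have c2 : dist (optimalGHInjr X.Rep Y.Rep (p : X.Rep × Y.Rep).2) (optimalGHInjl X.Rep Y.Rep (p : X.Rep × Y.Rep).1) =
        dist (optimalGHInjl X.Rep Y.Rep (p : X.Rep × Y.Rep).1) (optimalGHInjr X.Rep Y.Rep (p : X.Rep × Y.Rep).2) := dist_comm _ _
    rw [abs_le]
    constructor
    · rw [e1, e2]; linarith
    · rw [e1, e2]; linarith
  -- the path
  refine ⟨fun t => if h : 0 < t ∧ t < d then
      interpGH R hclosed hRne (t / d) (div_pos h.1 hd) ((div_lt_one hd).2 h.2)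
    else if t ≤ 0 then X else Y, ?_, ?_, ?_⟩
  · simp
  · have h1 : ¬ (0 < d ∧ d < d) := fun h => lt_irrefl d h.2
    have h2 : ¬ (d ≤ 0) := not_le.2 hd
    simp only [hdd] at h1 h2 ⊢
    rw [dif_neg h1, if_neg h2]
  intro s hs t ht
  set γ : ℝ → GHSpace := fun t => if h : 0 < t ∧ t < d then
      interpGH R hclosed hRne (t / d) (div_pos h.1 hd) ((div_lt_one hd).2 h.2)
    else if t ≤ 0 then X else Y with hγdef
  show dist (γ s) (γ t) = |s - t|
  have hγ0 : γ 0 = X := by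
    rw [hγdef]
    simp
  have hγd : γ d = Y := by
    rw [hγdef]
    have h1 : ¬ (0 < d ∧ d < d) := fun h => lt_irrefl d h.2
    have h2 : ¬ (d ≤ 0) := not_le.2 hd
    simp only []
    rw [dif_neg h1, if_neg h2]
  have hγmid : ∀ u (h0 : 0 < u) (h1 : u < d),
      γ u = interpGH R hclosed hRne (u / d) (div_pos h0 hd) ((div_lt_one hd).2 h1) := by
    intro u h0 h1
    rw [hγdef]
    exact dif_pos ⟨h0, h1⟩
  -- upper bound : dist X (γ t) ≤ t for interior t
  have UX : ∀ u, 0 < u → u < d → dist X (γ u) ≤ u := by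
    intro u h0 h1
    rw [hγmid u h0 h1]
    set c : ℝ := u / d with hc
    have hc0 : 0 < c := div_pos h0 hd
    have hc1 : c < 1 := (div_lt_one hd).2 h1
    have key2 : dist (toGHSpace X.Rep) (interpGH R hclosed hRne c hc0 hc1) ≤ u := by
      refine @ghDist_le_of_glue ↥R X.Rep ↥R _ _ _ (interpMetric R c hc0 hc1)
        (interp_compactSpace R hclosed c hc0 hc1) hRne hRne
        (fun z => (z : X.Rep × Y.Rep).1) id u h0 ?_ ?_ Function.surjective_id
      · intro p q
        have key : dist (p : X.Rep × Y.Rep).1 (q : X.Rep × Y.Rep).1 - interpDist R c p q =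
            c * (dist (p : X.Rep × Y.Rep).1 (q : X.Rep × Y.Rep).1 - dist (p : X.Rep × Y.Rep).2 (q : X.Rep × Y.Rep).2) := by
          simp only [interpDist]; ring
        show |dist (p : X.Rep × Y.Rep).1 (q : X.Rep × Y.Rep).1 - interpDist R c p q| ≤ 2 * u
        rw [key, abs_mul, abs_of_pos hc0]
        have h2 := habs p q
        have h3 : c * |dist (p : X.Rep × Y.Rep).1 (q : X.Rep × Y.Rep).1 - dist (p : X.Rep × Y.Rep).2 (q : X.Rep × Y.Rep).2|
            ≤ c * (2 * d) := by
          apply mul_le_mul_of_nonneg_left h2 hc0.le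
        have h4 : c * (2 * d) = 2 * u := by
          rw [hc]; field_simp
        linarith
      · intro a
        obtain ⟨b, hb⟩ := surjL a
        exact ⟨⟨(a, b), hb⟩, rfl⟩
    rw [X.toGHSpace_rep] at key2
    exact key2
  -- upper bound : dist (γ t) Y ≤ d - t for interior t
  have UY : ∀ u, 0 < u → u < d → dist (γ u) Y ≤ d - u := by
    intro u h0 h1
    rw [hγmid u h0 h1]
    set c : ℝ := u / d with hc
    have hc0 : 0 < c := div_pos h0 hd
    have hc1 : c < 1 := (div_lt_one hd).2 h1
    have key2 : dist (interpGH R hclosed hRne c hc0 hc1) (toGHSpace Y.Rep) ≤ d - u := by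
      refine @ghDist_le_of_glue ↥R ↥R Y.Rep (interpMetric R c hc0 hc1)
        (interp_compactSpace R hclosed c hc0 hc1) hRne _ _ _ hRne
        id (fun z => (z : X.Rep × Y.Rep).2) (d - u) (by linarith) ?_ Function.surjective_id ?_
      · intro p q
        have key : interpDist R c p q - dist (p : X.Rep × Y.Rep).2 (q : X.Rep × Y.Rep).2 =
            (1 - c) * (dist (p : X.Rep × Y.Rep).1 (q : X.Rep × Y.Rep).1 - dist (p : X.Rep × Y.Rep).2 (q : X.Rep × Y.Rep).2) := by
          simp only [interpDist]; ring
        show |interpDist R c p q - dist (p : X.Rep × Y.Rep).2 (q : X.Rep × Y.Rep).2| ≤ 2 * (d - u)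
        rw [key, abs_mul, abs_of_pos (by linarith : (0:ℝ) < 1 - c)]
        have h2 := habs p q
        have h3 : (1 - c) * |dist (p : X.Rep × Y.Rep).1 (q : X.Rep × Y.Rep).1 - dist (p : X.Rep × Y.Rep).2 (q : X.Rep × Y.Rep).2|
            ≤ (1 - c) * (2 * d) := by
          apply mul_le_mul_of_nonneg_left h2 (by linarith)
        have h4 : (1 - c) * (2 * d) = 2 * (d - u) := by
          rw [hc]; field_simp
        linarith
      · intro b
        obtain ⟨a, ha⟩ := surjR b
        exact ⟨⟨(a, b), ha⟩, rfl⟩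
    rw [Y.toGHSpace_rep] at key2
    exact key2
  -- upper bound in the interior
  have Umid : ∀ u v, 0 < u → u < d → 0 < v → v < d → dist (γ u) (γ v) ≤ |u - v| := by
    intro u v hu0 hu1 hv0 hv1
    rcases eq_or_ne u v with rfl | huv
    · simp
    have hε : 0 < |u - v| := abs_pos.2 (sub_ne_zero.2 huv)
    rw [hγmid u hu0 hu1, hγmid v hv0 hv1]
    set cu : ℝ := u / d with hcu
    set cv : ℝ := v / d with hcv
    have hcu0 : 0 < cu := div_pos hu0 hd
    have hcu1 : cu < 1 := (div_lt_one hd).2 hu1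
    have hcv0 : 0 < cv := div_pos hv0 hd
    have hcv1 : cv < 1 := (div_lt_one hd).2 hv1
    refine @ghDist_le_of_glue ↥R ↥R ↥R (interpMetric R cu hcu0 hcu1)
      (interp_compactSpace R hclosed cu hcu0 hcu1) hRne (interpMetric R cv hcv0 hcv1)
      (interp_compactSpace R hclosed cv hcv0 hcv1) hRne hRne
      id id |u - v| hε ?_ Function.surjective_id Function.surjective_id
    intro p q
    have key : interpDist R cu p q - interpDist R cv p q =
        (cv - cu) * (dist (p : X.Rep × Y.Rep).1 (q : X.Rep × Y.Rep).1 - dist (p : X.Rep × Y.Rep).2 (q : X.Rep × Y.Rep).2) := by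
      simp only [interpDist]; ring
    show |interpDist R cu p q - interpDist R cv p q| ≤ 2 * |u - v|
    rw [key, abs_mul]
    have h2 := habs p q
    have h3 : |cv - cu| * |dist (p : X.Rep × Y.Rep).1 (q : X.Rep × Y.Rep).1 - dist (p : X.Rep × Y.Rep).2 (q : X.Rep × Y.Rep).2|
        ≤ |cv - cu| * (2 * d) := mul_le_mul_of_nonneg_left h2 (abs_nonneg _)
    have h4 : |cv - cu| * (2 * d) = 2 * |u - v| := by
      rw [hcu, hcv, div_sub_div_same, abs_div, abs_of_pos hd, abs_sub_comm]
      field_simp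
    linarith
  -- combined upper bound on [0, d]
  have U : ∀ u ∈ Set.Icc (0:ℝ) d, ∀ v ∈ Set.Icc (0:ℝ) d, dist (γ u) (γ v) ≤ |u - v| := by
    have UX' : ∀ v ∈ Set.Icc (0:ℝ) d, dist X (γ v) ≤ v := by
      intro v hv
      rcases eq_or_lt_of_le hv.1 with h0 | h0
      · rw [← h0, hγ0, dist_self]
      rcases eq_or_lt_of_le hv.2 with h1 | h1
      · rw [h1, hγd]
      exact UX v h0 h1
    have UY' : ∀ v ∈ Set.Icc (0:ℝ) d, dist (γ v) Y ≤ d - v := by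
      intro v hv
      rcases eq_or_lt_of_le hv.1 with h0 | h0
      · rw [← h0, hγ0]; simpa [sub_zero] using le_of_eq hdd
      rcases eq_or_lt_of_le hv.2 with h1 | h1
      · rw [h1, hγd, dist_self]; linarith [le_of_eq h1]
      exact UY v h0 h1
    intro u hu v hv
    rcases eq_or_lt_of_le hu.1 with h0 | h0
    · rw [← h0, hγ0, abs_sub_comm]
      rw [abs_of_nonneg (by simpa [← h0] using hv.1 : (0:ℝ) ≤ v - 0), sub_zero]
      exact UX' v hv
    rcases eq_or_lt_of_le hu.2 with h1 | h1
    · rw [h1, hγd, dist_comm]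
      rw [abs_sub_comm, abs_of_nonpos (by linarith [hv.2] : v - d ≤ 0)]
      have := UY' v hv
      linarith
    -- u interior
    rcases eq_or_lt_of_le hv.1 with k0 | k0
    · rw [← k0, hγ0, dist_comm]
      rw [abs_of_nonneg (by linarith : (0:ℝ) ≤ u - 0), sub_zero]
      exact UX' u hu
    rcases eq_or_lt_of_le hv.2 with k1 | k1
    · rw [k1, hγd]
      rw [abs_of_nonpos (by linarith : u - d ≤ 0)]
      have := UY' u hu
      linarith
    exact Umid u v h0 h1 k0 k1
  -- lower bound and conclusion
  have main : ∀ u ∈ Set.Icc (0:ℝ) d, ∀ v ∈ Set.Icc (0:ℝ) d, u ≤ v →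
      dist (γ u) (γ v) = |u - v| := by
    intro u hu v hv huv
    have e0 : |u - v| = v - u := by rw [abs_sub_comm]; exact abs_of_nonneg (by linarith)
    have mem0 : (0:ℝ) ∈ Set.Icc (0:ℝ) d := ⟨le_refl _, hd.le⟩
    have memd : d ∈ Set.Icc (0:ℝ) d := ⟨hd.le, le_refl _⟩
    have l1 : dist (γ 0) (γ u) ≤ u := by
      have := U 0 mem0 u hu
      rw [abs_sub_comm, abs_of_nonneg (by linarith [hu.1] : (0:ℝ) ≤ u - 0), sub_zero] at this
      exact this
    have l2 : dist (γ v) (γ d) ≤ d - v := by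
      have := U v hv d memd
      rw [abs_of_nonpos (by linarith [hv.2] : v - d ≤ 0)] at this
      linarith
    have tri : dist (γ 0) (γ d) ≤ dist (γ 0) (γ u) + dist (γ u) (γ v) + dist (γ v) (γ d) :=
      dist_triangle4 _ _ _ _
    rw [hγ0, hγd, ← hdd] at tri
    rw [hγ0] at l1
    rw [hγd] at l2
    have upper := U u hu v hv
    rw [e0]
    rw [e0] at upper
    linarith
  rcases le_total s t with hst | hst
  · exact main s hs t ht hst
  · rw [dist_comm, abs_sub_comm]
    exact main t ht s hs hst
end

section
/- A family M of compact metric spaces is precompact in the Gromov–Hausdorff space 𝔐 if and only if it is uniformly totally bounded, i.e., (1) there exists D ≥ 0 with diam X ≤ D for all X ∈ M, and (2) for every ε > 0 there exists N(ε) ∈ ℕ such that every X ∈ M has an ε-net of at most N(ε) points. -/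
open GromovHausdorff Metric Filter Topology

lemma key_transfer (p q : GHSpace) (r : ℝ) (h : dist p q < r) :
    Metric.diam (Set.univ : Set p.Rep) ≤ Metric.diam (Set.univ : Set q.Rep) + 2 * r ∧
    ∀ (S : Finset q.Rep) (ε : ℝ), (∀ x : q.Rep, ∃ s ∈ S, dist s x < ε) →
      ∃ T : Finset p.Rep, T.card ≤ S.card ∧ ∀ x : p.Rep, ∃ t ∈ T, dist t x < ε + 2 * r := by
  classical
  set X := p.Rep
  set Y := q.Rep
  set Φ : X → OptimalGHCoupling X Y := optimalGHInjl X Y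
  set Ψ : Y → OptimalGHCoupling X Y := optimalGHInjr X Y
  have hΦ : Isometry Φ := isometry_optimalGHInjl X Y
  have hΨ : Isometry Ψ := isometry_optimalGHInjr X Y
  have hH : hausdorffDist (Set.range Φ) (Set.range Ψ) < r := by
    rw [hausdorffDist_optimal, ← dist_ghDist]; exact h
  have hAne : (Set.range Φ).Nonempty := Set.range_nonempty _
  have hBne : (Set.range Ψ).Nonempty := Set.range_nonempty _
  have hAb : Bornology.IsBounded (Set.range Φ) := (isCompact_range hΦ.continuous).isBounded
  have hBb : Bornology.IsBounded (Set.range Ψ) := (isCompact_range hΨ.continuous).isBounded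
  have hfin : EMetric.hausdorffEdist (Set.range Φ) (Set.range Ψ) ≠ ⊤ :=
    hausdorffEdist_ne_top_of_nonempty_of_bounded hAne hBne hAb hBb
  have hfin' : EMetric.hausdorffEdist (Set.range Ψ) (Set.range Φ) ≠ ⊤ := by
    exact hausdorffEdist_ne_top_of_nonempty_of_bounded hBne hAne hBb hAb
  have hr : (0:ℝ) ≤ r := le_trans hausdorffDist_nonneg hH.le
  constructor
  · -- diameter bound
    refine diam_le_of_forall_dist_le (by positivity) ?_
    intro x _ y _
    obtain ⟨x', hx', hdx⟩ := exists_dist_lt_of_hausdorffDist_lt (Set.mem_range_self x) hH hfin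
    obtain ⟨y', hy', hdy⟩ := exists_dist_lt_of_hausdorffDist_lt (Set.mem_range_self y) hH hfin
    have hxy' : dist x' y' ≤ Metric.diam (Set.univ : Set Y) := by
      rw [← hΨ.diam_range]
      exact dist_le_diam_of_mem hBb hx' hy'
    have : dist x y = dist (Φ x) (Φ y) := (hΦ.dist_eq x y).symm
    rw [this]
    calc dist (Φ x) (Φ y) ≤ dist (Φ x) x' + dist x' y' + dist y' (Φ y) := dist_triangle4 _ _ _ _
      _ ≤ r + Metric.diam (Set.univ : Set Y) + r := by
          have := dist_comm y' (Φ y)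
          nlinarith [hdx, hdy, hxy']
      _ = Metric.diam (Set.univ : Set Y) + 2 * r := by ring
  · -- net transfer
    intro S ε hS
    have hchoice : ∀ y : Y, ∃ x : X, dist (Ψ y) (Φ x) < r := by
      intro y
      obtain ⟨z, hz, hdz⟩ := exists_dist_lt_of_hausdorffDist_lt' (Set.mem_range_self y) hH hfin
      obtain ⟨x, rfl⟩ := hz
      exact ⟨x, by rwa [dist_comm]⟩
    choose f hf using hchoice
    refine ⟨S.image f, Finset.card_image_le, ?_⟩
    intro x
    obtain ⟨b, hb, hdb⟩ := exists_dist_lt_of_hausdorffDist_lt (Set.mem_range_self x) hH hfin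
    obtain ⟨y, rfl⟩ := hb
    obtain ⟨s, hs, hds⟩ := hS y
    refine ⟨f s, Finset.mem_image_of_mem f hs, ?_⟩
    have h1 : dist (f s) x = dist (Φ (f s)) (Φ x) := (hΦ.dist_eq _ _).symm
    have h2 : dist s y = dist (Ψ s) (Ψ y) := (hΨ.dist_eq _ _).symm
    have h3 : dist (Φ (f s)) (Φ x) ≤ dist (Φ (f s)) (Ψ s) + dist (Ψ s) (Ψ y) + dist (Ψ y) (Φ x) :=
      dist_triangle4 _ _ _ _
    have h4 := hf s
    rw [dist_comm] at h4 hdb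
    rw [h1]
    rw [h2] at hds
    linarith

theorem stmt17 (M : Set GHSpace) :
    IsCompact (closure M) ↔
      ((∃ D ≥ (0 : ℝ), ∀ p ∈ M, Metric.diam (Set.univ : Set p.Rep) ≤ D) ∧
        ∀ ε > (0 : ℝ), ∃ N : ℕ, ∀ p ∈ M,
          ∃ S : Finset p.Rep, S.card ≤ N ∧ ∀ x : p.Rep, ∃ s ∈ S, dist s x < ε) := by
  classical
  constructor
  · intro hcomp
    have htb : TotallyBounded M :=
      (hcomp.totallyBounded).subset subset_closure
    -- finite nets in each compact representative
    have hnet : ∀ (δ : ℝ), 0 < δ → ∀ q : GHSpace,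
        ∃ S : Finset q.Rep, ∀ x : q.Rep, ∃ s ∈ S, dist s x < δ := by
      intro δ hδ q
      obtain ⟨t, -, htfin, hcov⟩ :=
        finite_cover_balls_of_compact (isCompact_univ (X := q.Rep)) hδ
      refine ⟨htfin.toFinset, fun x => ?_⟩
      obtain ⟨s, hs, hxs⟩ := Set.mem_iUnion₂.1 (hcov (Set.mem_univ x))
      exact ⟨s, htfin.mem_toFinset.2 hs, by rw [dist_comm]; exact mem_ball.1 hxs⟩
    constructor
    · -- uniform diameter bound
      obtain ⟨t, htfin, hcov⟩ := (Metric.totallyBounded_iff.1 htb) 1 one_pos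
      have hbdd : BddAbove ((fun q : GHSpace => Metric.diam (Set.univ : Set q.Rep)) '' t) :=
        (htfin.image _).bddAbove
      obtain ⟨D0, hD0⟩ := hbdd
      refine ⟨max D0 0 + 2, by positivity, fun p hp => ?_⟩
      obtain ⟨q, hq, hpq⟩ := Set.mem_iUnion₂.1 (hcov hp)
      have := (key_transfer p q 1 (mem_ball.1 hpq)).1
      have hqD : Metric.diam (Set.univ : Set q.Rep) ≤ D0 :=
        hD0 (Set.mem_image_of_mem _ hq)
      have : Metric.diam (Set.univ : Set p.Rep) ≤ D0 + 2 := by linarith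
      have h0 : D0 ≤ max D0 0 := le_max_left _ _
      linarith
    · -- uniform nets
      intro ε hε
      obtain ⟨t, htfin, hcov⟩ := (Metric.totallyBounded_iff.1 htb) (ε/4) (by linarith)
      choose S hS using hnet (ε/2) (by linarith)
      refine ⟨htfin.toFinset.sup (fun q => (S q).card), fun p hp => ?_⟩
      obtain ⟨q, hq, hpq⟩ := Set.mem_iUnion₂.1 (hcov hp)
      obtain ⟨T, hTcard, hT⟩ :=
        (key_transfer p q (ε/4) (mem_ball.1 hpq)).2 (S q) (ε/2) (hS q)
      refine ⟨T, hTcard.trans (Finset.le_sup (f := fun q => (S q).card) (htfin.mem_toFinset.2 hq)), fun x => ?_⟩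
      obtain ⟨s, hs, hds⟩ := hT x
      exact ⟨s, hs, by linarith⟩
  · rintro ⟨⟨D, hD0, hdiam⟩, hnets⟩
    have hu : Tendsto (fun n : ℕ => 1 / ((n : ℝ) + 1)) atTop (𝓝 0) :=
      tendsto_one_div_add_atTop_nhds_zero_nat
    have hK : ∀ n : ℕ, ∃ N : ℕ, ∀ p ∈ M, ∃ S : Finset p.Rep,
        S.card ≤ N ∧ ∀ x : p.Rep, ∃ s ∈ S, dist s x < 1 / ((n : ℝ) + 1) := by
      intro n
      exact hnets (1 / ((n : ℝ) + 1)) (by positivity)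
    choose K hKp using hK
    have htb : TotallyBounded M := by
      refine GromovHausdorff.totallyBounded (C := D) (u := fun n => 1 / ((n : ℝ) + 1))
        (K := K) hu (fun p hp => hdiam p hp) ?_
      intro p hp n
      obtain ⟨S, hScard, hSnet⟩ := hKp n p hp
      refine ⟨(S : Set p.Rep), ?_, ?_⟩
      · simp only [Finset.coe_sort_coe, Cardinal.mk_coe_finset]
        exact_mod_cast hScard
      · intro x _
        obtain ⟨s, hs, hds⟩ := hSnet x
        exact Set.mem_iUnion₂.2 ⟨s, hs, mem_ball.2 (by rwa [dist_comm])⟩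
    exact TotallyBounded.isCompact_of_isClosed htb.closure isClosed_closure
end

section
/- Let X, Y be finite metric spaces, R an optimal correspondence, and for α, α' ∈ [0,1] equip R with metrics d_α and d_{α'} given by d_α((x,y),(x',y')) = α·d_X(x,x') + (1-α)·d_Y(y,y'). Then d_GH((R,d_α),(R,d_{α'})) ≤ |α − α'|·d_GH(X,Y), and combined with the triangle inequality through X and Y, equality holds: d_GH((R,d_α),(R,d_{α'})) = |α − α'|·d_GH(X,Y). -/
open GromovHausdorff Metric Filter Topology

theorem myGhDist_le {A : Type*} {B : Type*} [ma : MetricSpace A] [mb : MetricSpace B]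
    [CompactSpace A] [Nonempty A] [CompactSpace B] [Nonempty B]
    (Φ : A → B) (hΦ : Function.Surjective Φ) {ε : ℝ}
    (H : ∀ p q : A, |dist p q - dist (Φ p) (Φ q)| ≤ 2 * ε) : ghDist A B ≤ ε := by
  have h := ghDist_le_of_approx_subsets (s := (Set.univ : Set A)) (fun x => Φ x)
    (ε₁ := 0) (ε₂ := 2 * ε) (ε₃ := 0) ?_ ?_ ?_
  · linarith
  · intro x; exact ⟨x, Set.mem_univ x, by simp⟩
  · intro y; obtain ⟨a, ha⟩ := hΦ y; exact ⟨⟨a, Set.mem_univ a⟩, by simp [ha]⟩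
  · intro x y; rw [Subtype.dist_eq]; exact H x y

theorem myGhDist_comm {A : Type*} {B : Type*} [MetricSpace A] [MetricSpace B]
    [CompactSpace A] [Nonempty A] [CompactSpace B] [Nonempty B] :
    ghDist A B = ghDist B A := dist_comm _ _

theorem myGhDist_triangle {A : Type*} {B : Type*} {C : Type*}
    [MetricSpace A] [MetricSpace B] [MetricSpace C]
    [CompactSpace A] [Nonempty A] [CompactSpace B] [Nonempty B] [CompactSpace C] [Nonempty C] :
    ghDist A C ≤ ghDist A B + ghDist B C := dist_triangle _ _ _

theorem stmt19 {X Y : Type*} [MetricSpace X] [MetricSpace Y]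
    [Fintype X] [Fintype Y] [Nonempty X] [Nonempty Y]
    (R : Set (X × Y)) (hR : IsCorrespondence R) [Nonempty ↥R]
    (hopt : ghDist X Y = (1 / 2) * corrDis R)
    (α α' : ℝ) (hα : α ∈ Set.Icc (0 : ℝ) 1) (hα' : α' ∈ Set.Icc (0 : ℝ) 1)
    (dR dR' : MetricSpace ↥R)
    (hdist : ∀ p q : ↥R, @dist _ dR.toDist p q =
      α * dist (p : X × Y).1 (q : X × Y).1 + (1 - α) * dist (p : X × Y).2 (q : X × Y).2)
    (hdist' : ∀ p q : ↥R, @dist _ dR'.toDist p q =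
      α' * dist (p : X × Y).1 (q : X × Y).1 + (1 - α') * dist (p : X × Y).2 (q : X × Y).2) :
    @ghDist ↥R ↥R dR ‹_›
        (@Finite.compactSpace ↥R dR.toUniformSpace.toTopologicalSpace _) dR' ‹_›
        (@Finite.compactSpace ↥R dR'.toUniformSpace.toTopologicalSpace _) =
      |α - α'| * ghDist X Y := by
  obtain ⟨hα0, hα1⟩ := hα
  obtain ⟨hα'0, hα'1⟩ := hα'
  have hne : Nonempty ↥R := ‹_›
  set cα := @Finite.compactSpace ↥R dR.toUniformSpace.toTopologicalSpace _ with hcα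
  set cα' := @Finite.compactSpace ↥R dR'.toUniformSpace.toTopologicalSpace _ with hcα'
  have hd0 : 0 ≤ ghDist X Y := dist_nonneg
  -- the key distortion bound
  have key : ∀ p q : ↥R,
      |dist (p : X × Y).1 (q : X × Y).1 - dist (p : X × Y).2 (q : X × Y).2|
        ≤ 2 * ghDist X Y := by
    intro p q
    have hfin : {r : ℝ | ∃ p ∈ R, ∃ q ∈ R, r = |dist p.1 q.1 - dist p.2 q.2|}.Finite := by
      apply Set.Finite.subset (Set.finite_range
        (fun pq : (X × Y) × (X × Y) => |dist pq.1.1 pq.2.1 - dist pq.1.2 pq.2.2|))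
      rintro r ⟨a, _, b, _, rfl⟩
      exact ⟨(a, b), rfl⟩
    have hle : |dist (p : X × Y).1 (q : X × Y).1 - dist (p : X × Y).2 (q : X × Y).2| ≤
        corrDis R :=
      le_csSup hfin.bddAbove ⟨(p : X × Y), p.2, (q : X × Y), q.2, rfl⟩
    rw [hopt]; linarith
  -- upper bound: identity correspondence
  have hup : @ghDist ↥R ↥R dR hne cα dR' hne cα' ≤ |α - α'| * ghDist X Y := by
    refine @myGhDist_le ↥R ↥R dR dR' cα hne cα' hne id Function.surjective_id _ ?_
    intro p q
    simp only [id_eq]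
    rw [hdist p q, hdist' p q]
    set a := dist (p : X × Y).1 (q : X × Y).1
    set b := dist (p : X × Y).2 (q : X × Y).2
    have he : α * a + (1 - α) * b - (α' * a + (1 - α') * b) = (α - α') * (a - b) := by ring
    rw [he, abs_mul]
    have := mul_le_mul_of_nonneg_left (key p q) (abs_nonneg (α - α'))
    linarith
  -- projection bounds
  have projX : ∀ (m : MetricSpace ↥R) (c : @CompactSpace ↥R m.toUniformSpace.toTopologicalSpace)
      (β : ℝ), 0 ≤ β → β ≤ 1 →
      (∀ p q : ↥R, @dist _ m.toDist p q =
        β * dist (p : X × Y).1 (q : X × Y).1 + (1 - β) * dist (p : X × Y).2 (q : X × Y).2) →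
      @ghDist ↥R X m hne c _ _ _ ≤ (1 - β) * ghDist X Y := by
    intro m c β hβ0 hβ1 hm
    refine @myGhDist_le ↥R X m _ c hne _ _ (fun p => (p : X × Y).1) ?_ _ ?_
    · intro x
      obtain ⟨y, hy⟩ := hR.1 x
      exact ⟨⟨(x, y), hy⟩, rfl⟩
    · intro p q
      rw [hm p q]
      set a := dist (p : X × Y).1 (q : X × Y).1
      set b := dist (p : X × Y).2 (q : X × Y).2
      have he : β * a + (1 - β) * b - a = (1 - β) * (b - a) := by ring
      rw [he, abs_mul, abs_of_nonneg (by linarith : (0:ℝ) ≤ 1 - β), abs_sub_comm]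
      have := mul_le_mul_of_nonneg_left (key p q) (by linarith : (0:ℝ) ≤ 1 - β)
      linarith
  have projY : ∀ (m : MetricSpace ↥R) (c : @CompactSpace ↥R m.toUniformSpace.toTopologicalSpace)
      (β : ℝ), 0 ≤ β → β ≤ 1 →
      (∀ p q : ↥R, @dist _ m.toDist p q =
        β * dist (p : X × Y).1 (q : X × Y).1 + (1 - β) * dist (p : X × Y).2 (q : X × Y).2) →
      @ghDist ↥R Y m hne c _ _ _ ≤ β * ghDist X Y := by
    intro m c β hβ0 hβ1 hm
    refine @myGhDist_le ↥R Y m _ c hne _ _ (fun p => (p : X × Y).2) ?_ _ ?_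
    · intro y
      obtain ⟨x, hx⟩ := hR.2 y
      exact ⟨⟨(x, y), hx⟩, rfl⟩
    · intro p q
      rw [hm p q]
      set a := dist (p : X × Y).1 (q : X × Y).1
      set b := dist (p : X × Y).2 (q : X × Y).2
      have he : β * a + (1 - β) * b - b = β * (a - b) := by ring
      rw [he, abs_mul, abs_of_nonneg hβ0]
      have := mul_le_mul_of_nonneg_left (key p q) hβ0
      linarith
  have h2 := projX dR cα α hα0 hα1 hdist
  have h2' := projX dR' cα' α' hα'0 hα'1 hdist'
  have h3 := projY dR cα α hα0 hα1 hdist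
  have h3' := projY dR' cα' α' hα'0 hα'1 hdist'
  -- triangle inequalities
  have tri1 : ghDist X Y ≤ @ghDist X ↥R _ _ _ dR hne cα + @ghDist ↥R ↥R dR hne cα dR' hne cα' +
      @ghDist ↥R Y dR' hne cα' _ _ _ := by
    calc ghDist X Y ≤ @ghDist X ↥R _ _ _ dR hne cα + @ghDist ↥R Y dR hne cα _ _ _ :=
          @myGhDist_triangle X ↥R Y _ dR _ _ _ cα hne _ _
      _ ≤ @ghDist X ↥R _ _ _ dR hne cα + (@ghDist ↥R ↥R dR hne cα dR' hne cα' +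
          @ghDist ↥R Y dR' hne cα' _ _ _) := by
          have := @myGhDist_triangle ↥R ↥R Y dR dR' _ cα hne cα' hne _ _
          linarith
      _ = _ := by ring
  have tri2 : ghDist X Y ≤ @ghDist X ↥R _ _ _ dR' hne cα' +
      @ghDist ↥R ↥R dR hne cα dR' hne cα' + @ghDist ↥R Y dR hne cα _ _ _ := by
    have hcomm : @ghDist ↥R ↥R dR' hne cα' dR hne cα = @ghDist ↥R ↥R dR hne cα dR' hne cα' :=
      @myGhDist_comm ↥R ↥R dR' dR cα' hne cα hne
    calc ghDist X Y ≤ @ghDist X ↥R _ _ _ dR' hne cα' + @ghDist ↥R Y dR' hne cα' _ _ _ :=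
          @myGhDist_triangle X ↥R Y _ dR' _ _ _ cα' hne _ _
      _ ≤ @ghDist X ↥R _ _ _ dR' hne cα' + (@ghDist ↥R ↥R dR' hne cα' dR hne cα +
          @ghDist ↥R Y dR hne cα _ _ _) := by
          have := @myGhDist_triangle ↥R ↥R Y dR' dR _ cα' hne cα hne _ _
          linarith
      _ = _ := by rw [hcomm]; ring
  have e2 : @ghDist X ↥R _ _ _ dR hne cα = @ghDist ↥R X dR hne cα _ _ _ :=
    @myGhDist_comm X ↥R _ dR _ _ cα hne
  have e2' : @ghDist X ↥R _ _ _ dR' hne cα' = @ghDist ↥R X dR' hne cα' _ _ _ :=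
    @myGhDist_comm X ↥R _ dR' _ _ cα' hne
  rw [e2] at tri1
  rw [e2'] at tri2
  set D := @ghDist ↥R ↥R dR hne cα dR' hne cα'
  have low1 : (α - α') * ghDist X Y ≤ D := by nlinarith
  have low2 : (α' - α) * ghDist X Y ≤ D := by nlinarith
  rcases abs_cases (α - α') with ⟨h, _⟩ | ⟨h, _⟩
  · rw [h] at hup ⊢; linarith
  · rw [h] at hup ⊢; linarith
end
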